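/- Deterministic Cesàro limits for the AR(1) drift sequence (proved within Lemma 3): Let p ≥ 1, let z_t ∈ ℝ^p for t = 1, 2, …, let β₀ ∈ ℝ^p, let ρ₀ ∈ ℝ with |ρ₀| < 1, and let Σ_z be a p × p real matrix. Assume: (i) sup_{t≥1} |z_t′β₀| ≤ C for some C > 0; (ii) (1/n)·Σ_{t=1}^n z_t → 0 as n → ∞; (iii) for every fixed k ≥ 1, (1/n)·Σ_{t=1}^n z_{t+k} z_t′ → 0 (the zero matrix) as n → ∞; and (iv) (1/n)·Σ_{t=1}^n z_t z_t′ → Σ_z as n → ∞. Define ϱ_t = Σ_{k=1}^t ρ₀^{t−k} z_k′β₀. Then (1/n)·Σ_{t=1}^n ϱ_t → 0 and (1/n)·Σ_{t=1}^n ϱ_t² → β₀′ Σ_z β₀ / (1 − ρ₀²) as n → ∞. -/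

import Mathlib

open Filter Finset

lemma reindex_icc (v : ℕ → ℝ) (m n : ℕ) :
    ∑ t ∈ Icc (m + 1) n, v (t - m) = ∑ s ∈ Icc 1 (n - m), v s := by
  rw [← Finset.Ico_add_one_right_eq_Icc, ← Finset.Ico_add_one_right_eq_Icc, Finset.sum_Ico_eq_sum_range,
    Finset.sum_Ico_eq_sum_range]
  apply Finset.sum_congr
  · congr 1; omega
  · intro r _; congr 1; omega

lemma abs_sum_icc_le {f : ℕ → ℝ} {B : ℝ} (hB : ∀ t, |f t| ≤ B) (a n : ℕ) :
    |∑ t ∈ Icc a n, f t| ≤ (Icc a n).card * B :=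
  (Finset.abs_sum_le_sum_abs _ _).trans <| by
    rw [Finset.card_eq_sum_ones, Nat.cast_sum, Finset.sum_mul]
    exact Finset.sum_le_sum fun t _ => by simpa using hB t

lemma shift_cesaro {f : ℕ → ℝ} {B L : ℝ} (hB : ∀ t, |f t| ≤ B) (m : ℕ)
    (h : Tendsto (fun n : ℕ => (∑ t ∈ Icc 1 n, f t) / n) atTop (nhds L)) :
    Tendsto (fun n : ℕ => (∑ t ∈ Icc 1 (n - m), f t) / n) atTop (nhds L) := by
  have key : ∀ n : ℕ, (∑ t ∈ Icc 1 (n - m), f t) / n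
      = (∑ t ∈ Icc 1 n, f t) / n - (∑ t ∈ Icc (n - m + 1) n, f t) / n := by
    intro n
    rw [← sub_div]
    congr 1
    rw [eq_sub_iff_add_eq, ← Finset.sum_union]
    · congr 1
      ext t
      simp only [Finset.mem_union, Finset.mem_Icc]
      omega
    · rw [Finset.disjoint_left]
      intro t ht ht'
      simp only [Finset.mem_Icc] at ht ht'
      omega
  have herr : Tendsto (fun n : ℕ => (∑ t ∈ Icc (n - m + 1) n, f t) / n) atTop (nhds 0) := by
    rw [tendsto_zero_iff_norm_tendsto_zero]
    apply squeeze_zero (fun n => norm_nonneg _) (g := fun n : ℕ => (m * B) / n)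
    · intro n
      rw [Real.norm_eq_abs, abs_div, Nat.abs_cast, div_eq_mul_inv, div_eq_mul_inv]
      have hB0 : (0:ℝ) ≤ B := (abs_nonneg _).trans (hB 0)
      have hb : |∑ t ∈ Icc (n - m + 1) n, f t| ≤ (m : ℝ) * B := by
        refine (abs_sum_icc_le hB _ _).trans (mul_le_mul_of_nonneg_right ?_ hB0)
        have hcard : (Icc (n - m + 1) n).card ≤ m := by
          rw [Nat.card_Icc]; omega
        exact_mod_cast Nat.cast_le.mpr hcard
      exact mul_le_mul_of_nonneg_right hb (by positivity)
    · exact tendsto_const_div_atTop_nhds_zero_nat _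
  simp only [key]
  simpa using h.sub herr

lemma part1 (u : ℕ → ℝ) (ρ : ℝ) (hρ : |ρ| < 1) (C : ℝ) (hb : ∀ t, |u t| ≤ C)
    (hmean : Tendsto (fun n : ℕ => (∑ t ∈ Icc 1 n, u t) / n) atTop (nhds 0)) :
    Tendsto (fun n : ℕ => (∑ t ∈ Icc 1 n, ∑ k ∈ Icc 1 t, ρ ^ (t - k) * u k) / n)
      atTop (nhds 0) := by
  have hρ1 : ρ ≠ 1 := fun h => by rw [h] at hρ; simp at hρ
  have key : ∀ n : ℕ, (∑ t ∈ Icc 1 n, ∑ k ∈ Icc 1 t, ρ ^ (t - k) * u k) / n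
      = (ρ - 1)⁻¹ * ((∑ k ∈ Icc 1 n, ρ ^ (n + 1 - k) * u k) / n - (∑ k ∈ Icc 1 n, u k) / n) := by
    intro n
    rw [Finset.sum_comm' (t' := Icc 1 n) (s' := fun k => Icc k n)
      (by intro t k; simp only [Finset.mem_Icc]; omega)]
    have inner : ∀ k ∈ Icc 1 n, ∑ t ∈ Icc k n, ρ ^ (t - k) * u k
        = (ρ - 1)⁻¹ * (ρ ^ (n + 1 - k) * u k - u k) := by
      intro k hk
      simp only [Finset.mem_Icc] at hk
      rw [← Finset.sum_mul, ← Finset.Ico_add_one_right_eq_Icc, Finset.sum_Ico_eq_sum_range]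
      have : ∀ i ∈ Finset.range (n + 1 - k), ρ ^ (k + i - k) = ρ ^ i := by
        intro i _; congr 1; omega
      rw [Finset.sum_congr rfl this, geom_sum_eq hρ1]
      field_simp
    rw [Finset.sum_congr rfl inner, ← Finset.mul_sum, Finset.sum_sub_distrib]
    rw [mul_div_assoc, sub_div]
  simp only [key]
  have hA : Tendsto (fun n : ℕ => (∑ k ∈ Icc 1 n, ρ ^ (n + 1 - k) * u k) / n) atTop (nhds 0) := by
    rw [tendsto_zero_iff_norm_tendsto_zero]
    apply squeeze_zero (fun n => norm_nonneg _) (g := fun n : ℕ => C * (1 - |ρ|)⁻¹ / n)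
    · intro n
      rw [Real.norm_eq_abs, abs_div, Nat.abs_cast, div_eq_mul_inv, div_eq_mul_inv]
      refine mul_le_mul_of_nonneg_right ?_ (by positivity)
      calc |∑ k ∈ Icc 1 n, ρ ^ (n + 1 - k) * u k|
          ≤ ∑ k ∈ Icc 1 n, |ρ ^ (n + 1 - k) * u k| := Finset.abs_sum_le_sum_abs _ _
        _ ≤ ∑ k ∈ Icc 1 n, |ρ| ^ (n + 1 - k) * C := by
            refine Finset.sum_le_sum fun k _ => ?_
            rw [abs_mul, abs_pow]
            exact mul_le_mul_of_nonneg_left (hb k) (by positivity)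
        _ = (∑ k ∈ Icc 1 n, |ρ| ^ (n + 1 - k)) * C := by rw [Finset.sum_mul]
        _ ≤ (1 - |ρ|)⁻¹ * C := by
            refine mul_le_mul_of_nonneg_right ?_ ((abs_nonneg (u 0)).trans (hb 0))
            rw [← Finset.Ico_add_one_right_eq_Icc, Finset.sum_Ico_eq_sum_range]
            have h1 : ∀ i ∈ Finset.range (n + 1 - 1), |ρ| ^ (n + 1 - (1 + i)) ≤ |ρ| ^ (n - 1 - i) := by
              intro i hi
              simp only [Finset.mem_range] at hi
              exact pow_le_pow_of_le_one (abs_nonneg _) hρ.le (by omega)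
            refine (Finset.sum_le_sum h1).trans ?_
            rw [show n + 1 - 1 = n from rfl, Finset.sum_range_reflect]
            refine (Summable.sum_le_tsum (Finset.range n) (fun i _ => by positivity)
              (summable_geometric_of_lt_one (abs_nonneg ρ) hρ)).trans_eq ?_
            exact tsum_geometric_of_lt_one (abs_nonneg ρ) hρ
        _ = C * (1 - |ρ|)⁻¹ := mul_comm _ _
    · exact tendsto_const_div_atTop_nhds_zero_nat _
  have := ((hA.sub hmean).const_mul ((ρ - 1)⁻¹))
  simpa using this

lemma avg_bound {f : ℕ → ℝ} {B : ℝ} (hB : ∀ t, |f t| ≤ B) (a n : ℕ) (ha : 1 ≤ a) :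
    |(∑ t ∈ Icc a n, f t) / (n : ℝ)| ≤ B := by
  have hB0 : (0:ℝ) ≤ B := (abs_nonneg _).trans (hB 0)
  rcases Nat.eq_zero_or_pos n with rfl | hn
  · rw [Finset.Icc_eq_empty (by omega)]; simpa using hB0
  · rw [abs_div, Nat.abs_cast, div_le_iff₀ (by positivity)]
    refine (abs_sum_icc_le hB a n).trans ?_
    refine (mul_le_mul_of_nonneg_right ?_ hB0).trans_eq (mul_comm _ _)
    have : (Icc a n).card ≤ n := by rw [Nat.card_Icc]; omega
    exact_mod_cast this

lemma part2 (u : ℕ → ℝ) (ρ : ℝ) (hρ : |ρ| < 1) (C S : ℝ) (hC : 0 < C)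
    (hb : ∀ t, |u t| ≤ C)
    (hcov : ∀ k, 1 ≤ k →
      Tendsto (fun n : ℕ => (∑ t ∈ Icc 1 n, u (t + k) * u t) / n) atTop (nhds 0))
    (hvar : Tendsto (fun n : ℕ => (∑ t ∈ Icc 1 n, u t * u t) / n) atTop (nhds S)) :
    Tendsto (fun n : ℕ => (∑ t ∈ Icc 1 n, (∑ k ∈ Icc 1 t, ρ ^ (t - k) * u k) ^ 2) / n)
      atTop (nhds (S / (1 - ρ ^ 2))) := by
  have hbb : ∀ a b : ℕ, |u a * u b| ≤ C ^ 2 := by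
    intro a b
    rw [abs_mul, sq]
    exact mul_le_mul (hb a) (hb b) (abs_nonneg _) hC.le
  set g : ℕ → ℕ × ℕ → ℝ := fun n p =>
    ρ ^ (p.1 + p.2) * ((∑ t ∈ Icc (max p.1 p.2 + 1) n, u (t - p.1) * u (t - p.2)) / n) with hg
  set L : ℕ × ℕ → ℝ := fun p => ρ ^ (p.1 + p.2) * (if p.1 = p.2 then S else 0) with hL
  set bound : ℕ × ℕ → ℝ := fun p => C ^ 2 * (|ρ| ^ p.1 * |ρ| ^ p.2) with hbnd
  -- Step A : rewrite as tsum
  have keyA : ∀ n : ℕ, (∑ t ∈ Icc 1 n, (∑ k ∈ Icc 1 t, ρ ^ (t - k) * u k) ^ 2) / n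
      = ∑' p, g n p := by
    intro n
    have e1 : ∑ t ∈ Icc 1 n, (∑ k ∈ Icc 1 t, ρ ^ (t - k) * u k) ^ 2
        = ∑ p ∈ Finset.range n ×ˢ Finset.range n,
            ρ ^ (p.1 + p.2) * ∑ t ∈ Icc (max p.1 p.2 + 1) n, u (t - p.1) * u (t - p.2) := by
      have e2 : ∀ t ∈ Icc 1 n, (∑ k ∈ Icc 1 t, ρ ^ (t - k) * u k) ^ 2
          = ∑ p ∈ Finset.range t ×ˢ Finset.range t,
              ρ ^ (p.1 + p.2) * (u (t - p.1) * u (t - p.2)) := by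
        intro t _
        have hin : ∑ k ∈ Icc 1 t, ρ ^ (t - k) * u k
            = ∑ i ∈ Finset.range t, ρ ^ i * u (t - i) := by
          rw [← Finset.Ico_add_one_right_eq_Icc, Finset.sum_Ico_eq_sum_range, ← Finset.sum_range_reflect]
          refine Finset.sum_congr (by congr 1) fun i hi => ?_
          simp only [Finset.mem_range] at hi
          congr 2 <;> omega
        rw [hin, sq, Finset.sum_mul_sum, ← Finset.sum_product']
        refine Finset.sum_congr rfl fun p hp => ?_
        rw [pow_add]; ring
      rw [Finset.sum_congr rfl e2,
        Finset.sum_comm' (t' := Finset.range n ×ˢ Finset.range n)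
          (s' := fun p => Icc (max p.1 p.2 + 1) n)
          (by
            intro t p
            simp only [Finset.mem_Icc, Finset.mem_product, Finset.mem_range,
              Nat.succ_le_iff, max_lt_iff]
            omega)]
      exact Finset.sum_congr rfl fun p _ => (Finset.mul_sum _ _ _).symm
    have e3 : ∑' p, g n p = ∑ p ∈ Finset.range n ×ˢ Finset.range n, g n p := by
      refine tsum_eq_sum fun p hp => ?_
      simp only [Finset.mem_product, Finset.mem_range, not_and_or, not_lt] at hp
      have : Icc (max p.1 p.2 + 1) n = ∅ := Finset.Icc_eq_empty (by omega)
      simp [hg, this]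
    rw [e3, e1, Finset.sum_div]
    exact Finset.sum_congr rfl fun p _ => (mul_div_assoc _ _ _)
  -- Step B : bound
  have hbound : ∀ n p, ‖g n p‖ ≤ bound p := by
    intro n p
    simp only [Real.norm_eq_abs, hg, abs_mul, abs_pow, pow_add, hbnd]
    rw [mul_comm (C ^ 2)]
    exact mul_le_mul_of_nonneg_left
      (avg_bound (fun t => hbb _ _) _ n (Nat.succ_le_succ (Nat.zero_le _))) (by positivity)
  have hsumbound : Summable bound := by
    refine Summable.mul_left _ ?_
    exact (summable_geometric_of_lt_one (abs_nonneg ρ) hρ).mul_of_nonneg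
      (summable_geometric_of_lt_one (abs_nonneg ρ) hρ)
      (fun i => by positivity) (fun j => by positivity)
  -- Step C : pointwise limits
  have hpt : ∀ p : ℕ × ℕ, Tendsto (fun n => g n p) atTop (nhds (L p)) := by
    rintro ⟨i, j⟩
    rcases lt_trichotomy i j with hij | rfl | hij
    · have hmax : max i j = j := max_eq_right hij.le
      have e : ∀ n : ℕ, g n (i, j)
          = ρ ^ (i + j) * ((∑ s ∈ Icc 1 (n - j), u (s + (j - i)) * u s) / n) := by
        intro n
        simp only [hg]
        congr 2
        rw [hmax, ← reindex_icc (fun s => u (s + (j - i)) * u s) j n]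
        refine Finset.sum_congr rfl fun t ht => ?_
        simp only [Finset.mem_Icc] at ht
        have h1 : t - j + (j - i) = t - i := by omega
        simp only [h1]
      simp only [e, hL]
      rw [if_neg hij.ne, mul_zero]
      have := (shift_cesaro (fun t => hbb _ _) j (hcov (j - i) (by omega))).const_mul
        (ρ ^ (i + j))
      simpa using this
    · have e : ∀ n : ℕ, g n (i, i)
          = ρ ^ (i + i) * ((∑ s ∈ Icc 1 (n - i), u s * u s) / n) := by
        intro n
        simp only [hg]
        congr 2
        rw [max_self]
        exact reindex_icc (fun s => u s * u s) i n
      simp only [e, hL, if_pos rfl]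
      exact (shift_cesaro (fun t => hbb _ _) i hvar).const_mul (ρ ^ (i + i))
    · have hmax : max i j = i := max_eq_left hij.le
      have e : ∀ n : ℕ, g n (i, j)
          = ρ ^ (i + j) * ((∑ s ∈ Icc 1 (n - i), u (s + (i - j)) * u s) / n) := by
        intro n
        simp only [hg]
        congr 2
        rw [hmax, ← reindex_icc (fun s => u (s + (i - j)) * u s) i n]
        refine Finset.sum_congr rfl fun t ht => ?_
        simp only [Finset.mem_Icc] at ht
        have h1 : t - i + (i - j) = t - j := by omega
        simp only [h1, mul_comm]
      simp only [e, hL]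
      rw [if_neg hij.ne', mul_zero]
      have := (shift_cesaro (fun t => hbb _ _) i (hcov (i - j) (by omega))).const_mul
        (ρ ^ (i + j))
      simpa using this
  -- Step D : dominated convergence
  have hmain : Tendsto (fun n => ∑' p, g n p) atTop (nhds (∑' p, L p)) :=
    tendsto_tsum_of_dominated_convergence hsumbound hpt (Eventually.of_forall hbound)
  -- Step E : compute the limit
  have hρ2 : ρ ^ 2 < 1 := by
    rw [← sq_abs]
    exact pow_lt_one₀ (abs_nonneg _) hρ two_ne_zero
  have hLsum : ∑' p, L p = S / (1 - ρ ^ 2) := by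
    have hLsummable : Summable L := by
      refine Summable.of_norm_bounded hsumbound fun p => ?_
      simp only [Real.norm_eq_abs, hL, abs_mul, abs_pow, pow_add, hbnd]
      rw [mul_comm (C ^ 2)]
      refine mul_le_mul_of_nonneg_left ?_ (by positivity)
      have hSC : |S| ≤ C ^ 2 := by
        refine le_of_tendsto hvar.abs (Eventually.of_forall fun n => ?_)
        exact avg_bound (fun t => hbb _ _) 1 n le_rfl
      split
      · simpa using hSC
      · simpa using sq_nonneg C
    rw [Summable.tsum_prod' hLsummable fun i => (hLsummable.prod_factor i)]
    have e4 : ∀ i : ℕ, ∑' j, L (i, j) = (ρ ^ 2) ^ i * S := by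
      intro i
      rw [tsum_eq_single i (fun j hj => by simp [hL, if_neg (Ne.symm hj)])]
      simp only [hL, if_pos rfl]
      congr 1
      rw [← pow_mul, two_mul]
    rw [tsum_congr e4, tsum_mul_right, tsum_geometric_of_lt_one (sq_nonneg ρ) hρ2,
      inv_mul_eq_div]
  simp only [keyA]
  rw [← hLsum]
  exact hmain


/-- Deterministic Cesàro limits for the AR(1) drift sequence (within Lemma 3). -/
theorem ar1_drift_cesaro_limits
    (p : ℕ) (hp : 1 ≤ p)
    (z : ℕ → Fin p → ℝ) (β₀ : Fin p → ℝ) (ρ₀ : ℝ) (hρ : |ρ₀| < 1)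
    (Sz : Matrix (Fin p) (Fin p) ℝ)
    (C : ℝ) (hC : 0 < C)
    (hbd : ∀ t : ℕ, 1 ≤ t → |∑ j, z t j * β₀ j| ≤ C)
    (h2 : ∀ j, Tendsto (fun n : ℕ => (∑ t ∈ Finset.Icc 1 n, z t j) / n)
      atTop (nhds 0))
    (h3 : ∀ k : ℕ, 1 ≤ k → ∀ a b, Tendsto
      (fun n : ℕ => (∑ t ∈ Finset.Icc 1 n, z (t + k) a * z t b) / n)
      atTop (nhds 0))
    (h4 : ∀ a b, Tendsto
      (fun n : ℕ => (∑ t ∈ Finset.Icc 1 n, z t a * z t b) / n)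
      atTop (nhds (Sz a b))) :
    Tendsto (fun n : ℕ =>
        (∑ t ∈ Finset.Icc 1 n, ∑ k ∈ Finset.Icc 1 t,
          ρ₀ ^ (t - k) * ∑ j, z k j * β₀ j) / n) atTop (nhds 0) ∧
    Tendsto (fun n : ℕ =>
        (∑ t ∈ Finset.Icc 1 n, (∑ k ∈ Finset.Icc 1 t,
          ρ₀ ^ (t - k) * ∑ j, z k j * β₀ j) ^ 2) / n) atTop
      (nhds ((∑ a, ∑ b, β₀ a * Sz a b * β₀ b) / (1 - ρ₀ ^ 2))) := by
  classical
  set u : ℕ → ℝ := fun t => if t = 0 then 0 else ∑ j, z t j * β₀ j with hu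
  set S : ℝ := ∑ a, ∑ b, β₀ a * Sz a b * β₀ b with hS
  have hb : ∀ t, |u t| ≤ C := by
    intro t
    rcases Nat.eq_zero_or_pos t with rfl | ht
    · simp [hu, hC.le]
    · simp only [hu, if_neg (by omega : t ≠ 0)]
      exact hbd t ht
  have hmean : Tendsto (fun n : ℕ => (∑ t ∈ Icc 1 n, u t) / n) atTop (nhds 0) := by
    have e : ∀ n : ℕ, (∑ t ∈ Icc 1 n, u t) / n
        = ∑ j, ((∑ t ∈ Icc 1 n, z t j) / n) * β₀ j := by
      intro n
      have e1 : ∑ t ∈ Icc 1 n, u t = ∑ j, (∑ t ∈ Icc 1 n, z t j) * β₀ j := by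
        calc ∑ t ∈ Icc 1 n, u t = ∑ t ∈ Icc 1 n, ∑ j, z t j * β₀ j := by
              refine Finset.sum_congr rfl fun t ht => ?_
              simp only [Finset.mem_Icc] at ht
              simp only [hu, if_neg (by omega : t ≠ 0)]
          _ = ∑ j, ∑ t ∈ Icc 1 n, z t j * β₀ j := Finset.sum_comm
          _ = ∑ j, (∑ t ∈ Icc 1 n, z t j) * β₀ j := by
              exact Finset.sum_congr rfl fun j _ => (Finset.sum_mul _ _ _).symm
      rw [e1, Finset.sum_div]
      exact Finset.sum_congr rfl fun j _ => mul_div_right_comm _ _ _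
    simp only [e]
    have := tendsto_finset_sum Finset.univ (fun j (_ : j ∈ Finset.univ) => (h2 j).mul_const (β₀ j))
    simpa using this
  have expand : ∀ k n : ℕ, ∑ t ∈ Icc 1 n, u (t + k) * u t
      = ∑ a, ∑ b, (∑ t ∈ Icc 1 n, z (t + k) a * z t b) * (β₀ a * β₀ b) := by
    intro k n
    calc ∑ t ∈ Icc 1 n, u (t + k) * u t
        = ∑ t ∈ Icc 1 n, ∑ a, ∑ b, z (t + k) a * z t b * (β₀ a * β₀ b) := by
          refine Finset.sum_congr rfl fun t ht => ?_
          simp only [Finset.mem_Icc] at ht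
          simp only [hu, if_neg (by omega : t + k ≠ 0), if_neg (by omega : t ≠ 0)]
          rw [Finset.sum_mul_sum]
          exact Finset.sum_congr rfl fun a _ => Finset.sum_congr rfl fun b _ => by ring
      _ = ∑ a, ∑ b, ∑ t ∈ Icc 1 n, z (t + k) a * z t b * (β₀ a * β₀ b) := by
          rw [Finset.sum_comm]
          exact Finset.sum_congr rfl fun a _ => Finset.sum_comm
      _ = ∑ a, ∑ b, (∑ t ∈ Icc 1 n, z (t + k) a * z t b) * (β₀ a * β₀ b) := by
          exact Finset.sum_congr rfl fun a _ => Finset.sum_congr rfl fun b _ =>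
            (Finset.sum_mul _ _ _).symm
  have ediv : ∀ k n : ℕ, (∑ t ∈ Icc 1 n, u (t + k) * u t) / n
      = ∑ a, ∑ b, ((∑ t ∈ Icc 1 n, z (t + k) a * z t b) / n) * (β₀ a * β₀ b) := by
    intro k n
    rw [expand k n, Finset.sum_div]
    refine Finset.sum_congr rfl fun a _ => ?_
    rw [Finset.sum_div]
    exact Finset.sum_congr rfl fun b _ => mul_div_right_comm _ _ _
  have hcov : ∀ k, 1 ≤ k →
      Tendsto (fun n : ℕ => (∑ t ∈ Icc 1 n, u (t + k) * u t) / n) atTop (nhds 0) := by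
    intro k hk
    simp only [ediv k]
    have := tendsto_finset_sum Finset.univ (fun a (_ : a ∈ Finset.univ) =>
      tendsto_finset_sum Finset.univ (fun b (_ : b ∈ Finset.univ) =>
        (h3 k hk a b).mul_const (β₀ a * β₀ b)))
    simpa using this
  have hvar : Tendsto (fun n : ℕ => (∑ t ∈ Icc 1 n, u t * u t) / n) atTop (nhds S) := by
    have e0 : ∀ n : ℕ, (∑ t ∈ Icc 1 n, u t * u t) / n
        = ∑ a, ∑ b, ((∑ t ∈ Icc 1 n, z t a * z t b) / n) * (β₀ a * β₀ b) := by
      intro n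
      have := ediv 0 n
      simpa using this
    simp only [e0]
    have hlim := tendsto_finset_sum Finset.univ (fun a (_ : a ∈ Finset.univ) =>
      tendsto_finset_sum Finset.univ (fun b (_ : b ∈ Finset.univ) =>
        (h4 a b).mul_const (β₀ a * β₀ b)))
    have hSe : S = ∑ a, ∑ b, Sz a b * (β₀ a * β₀ b) := by
      rw [hS]
      exact Finset.sum_congr rfl fun a _ => Finset.sum_congr rfl fun b _ => by ring
    rw [hSe]
    exact hlim
  have hcong1 : ∀ n : ℕ,
      (∑ t ∈ Icc 1 n, ∑ k ∈ Icc 1 t, ρ₀ ^ (t - k) * u k) / n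
      = (∑ t ∈ Icc 1 n, ∑ k ∈ Icc 1 t, ρ₀ ^ (t - k) * ∑ j, z k j * β₀ j) / n := by
    intro n
    congr 1
    refine Finset.sum_congr rfl fun t _ => Finset.sum_congr rfl fun k hk => ?_
    simp only [Finset.mem_Icc] at hk
    simp only [hu, if_neg (by omega : k ≠ 0)]
  have hcong2 : ∀ n : ℕ,
      (∑ t ∈ Icc 1 n, (∑ k ∈ Icc 1 t, ρ₀ ^ (t - k) * u k) ^ 2) / n
      = (∑ t ∈ Icc 1 n, (∑ k ∈ Icc 1 t, ρ₀ ^ (t - k) * ∑ j, z k j * β₀ j) ^ 2) / n := by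
    intro n
    congr 1
    refine Finset.sum_congr rfl fun t _ => ?_
    congr 1
    refine Finset.sum_congr rfl fun k hk => ?_
    simp only [Finset.mem_Icc] at hk
    simp only [hu, if_neg (by omega : k ≠ 0)]
  constructor
  · exact (part1 u ρ₀ hρ C hb hmean).congr hcong1
  · exact (part2 u ρ₀ hρ C S hC hb hcov hvar).congr hcong2
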